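/- Multidimensional simple linear set probability: let ε > 0, let a₁,...,aₙ be positive rationals, let Y₁,...,Yₙ be independent random variables with Yⱼ ~ DLap(aⱼε, 0), let b̄₀, p̄₁,...,p̄ₘ ∈ ℕⁿ, and suppose each element of S = {b̄₀ + Σᵢ kᵢ·p̄ᵢ : k₁,...,kₘ ∈ ℕ} has a unique such representation with p̄ᵢ·ā > 0 for all i (where ā = (a₁,...,aₙ) and · is the dot product). Then Prob((Y₁,...,Yₙ) ∈ S) = κ · e^{-ε·(b̄₀·ā)} · Πᵢ₌₁ᵐ 1/(1 - e^{-ε·(p̄ᵢ·ā)}), where κ = Πⱼ₌₁ⁿ (1-e^{-aⱼε})/(1+e^{-aⱼε}). -/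

import Mathlib

open Finset

private lemma geom_pi_aux : ∀ (m : ℕ) (r : Fin m → ℝ), (∀ i, 0 ≤ r i) → (∀ i, r i < 1) →
    Summable (fun k : Fin m → ℕ => ∏ i, r i ^ k i) ∧
      ∑' k : Fin m → ℕ, ∏ i, r i ^ k i = ∏ i, (1 - r i)⁻¹ := by
  intro m
  induction m with
  | zero =>
    intro r _ _
    refine ⟨Summable.of_finite, ?_⟩
    rw [tsum_eq_single (fun i : Fin 0 => (0 : ℕ))
      (fun b' hb => absurd (funext fun i => i.elim0) hb)]
    simp
  | succ m ih =>
    intro r h0 h1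
    obtain ⟨ihs, ihv⟩ := ih (fun i => r i.succ) (fun i => h0 _) (fun i => h1 _)
    have hgeom : Summable (fun k : ℕ => r 0 ^ k) := summable_geometric_of_lt_one (h0 0) (h1 0)
    have hgs : Summable (fun q : ℕ × (Fin m → ℕ) => r 0 ^ q.1 * ∏ i : Fin m, r i.succ ^ q.2 i) :=
      Summable.mul_of_nonneg (f := fun k : ℕ => r 0 ^ k)
        (g := fun k : Fin m → ℕ => ∏ i : Fin m, r i.succ ^ k i) hgeom ihs
        (Pi.le_def.mpr fun k => pow_nonneg (h0 0) _)
        (Pi.le_def.mpr fun k => Finset.prod_nonneg fun i _ => pow_nonneg (h0 _) _)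
    have hfe : (fun k : Fin (m+1) → ℕ => ∏ i, r i ^ k i) =
        (fun q : ℕ × (Fin m → ℕ) => r 0 ^ q.1 * ∏ i : Fin m, r i.succ ^ q.2 i) ∘
          ((Fin.consEquiv (fun _ => ℕ)).symm) := by
      funext k
      simp only [Function.comp_apply, Fin.consEquiv_symm_apply, Fin.prod_univ_succ]
      rfl
    have hsumm : Summable (fun k : Fin (m+1) → ℕ => ∏ i, r i ^ k i) := by
      rw [hfe]
      exact hgs.comp_injective ((Fin.consEquiv (fun _ => ℕ)).symm).injective
    refine ⟨hsumm, ?_⟩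
    calc ∑' k : Fin (m+1) → ℕ, ∏ i, r i ^ k i
        = ∑' q : ℕ × (Fin m → ℕ), r 0 ^ q.1 * ∏ i : Fin m, r i.succ ^ q.2 i := by
          rw [hfe, Function.comp_def]
          exact Equiv.tsum_eq ((Fin.consEquiv (fun _ => ℕ)).symm)
            (fun q : ℕ × (Fin m → ℕ) => r 0 ^ q.1 * ∏ i : Fin m, r i.succ ^ q.2 i)
      _ = (∑' k : ℕ, r 0 ^ k) * ∑' k : Fin m → ℕ, ∏ i : Fin m, r i.succ ^ k i :=
          (Summable.tsum_mul_tsum hgeom ihs hgs).symm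
      _ = ∏ i, (1 - r i)⁻¹ := by
          rw [ihv, tsum_geometric_of_lt_one (h0 0) (h1 0), Fin.prod_univ_succ]

/-- Probability of a multidimensional simple linear set under independent
mean-zero discrete Laplace variables `Yⱼ ~ DLap(aⱼ ε, 0)`: the probability of
`S = {b̄₀ + Σᵢ kᵢ p̄ᵢ}` equals `κ · e^{-ε (b̄₀·ā)} · Πᵢ (1 - e^{-ε (p̄ᵢ·ā)})⁻¹`. -/
theorem discrete_laplace_simple_linear_set_prob (n m : ℕ) (ε : ℝ) (hε : 0 < ε)
    (a : Fin n → ℚ) (ha : ∀ j, 0 < a j)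
    (b : Fin n → ℕ) (p : Fin m → Fin n → ℕ)
    (hppos : ∀ i, 0 < ∑ j, (p i j : ℝ) * (a j : ℝ))
    (hsimple : Function.Injective
      (fun k : Fin m → ℕ => fun j : Fin n => b j + ∑ i, k i * p i j)) :
    ∑' x : (Set.range (fun k : Fin m → ℕ => fun j : Fin n => b j + ∑ i, k i * p i j)),
        (∏ j, (1 - Real.exp (-((a j : ℝ) * ε))) / (1 + Real.exp (-((a j : ℝ) * ε)))) *
          Real.exp (-ε * ∑ j, ((x : Fin n → ℕ) j : ℝ) * (a j : ℝ)) =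
      (∏ j, (1 - Real.exp (-((a j : ℝ) * ε))) / (1 + Real.exp (-((a j : ℝ) * ε)))) *
        Real.exp (-ε * ∑ j, (b j : ℝ) * (a j : ℝ)) *
        ∏ i, (1 - Real.exp (-ε * ∑ j, (p i j : ℝ) * (a j : ℝ)))⁻¹ := by
  set f := fun k : Fin m → ℕ => fun j : Fin n => b j + ∑ i, k i * p i j with hf
  set κ := ∏ j, (1 - Real.exp (-((a j : ℝ) * ε))) / (1 + Real.exp (-((a j : ℝ) * ε))) with hκ
  set r : Fin m → ℝ := fun i => Real.exp (-ε * ∑ j, (p i j : ℝ) * (a j : ℝ)) with hr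
  have hr0 : ∀ i, 0 ≤ r i := fun i => (Real.exp_pos _).le
  have hr1 : ∀ i, r i < 1 := fun i => by
    rw [hr]
    exact Real.exp_lt_one_iff.mpr (by nlinarith [hppos i])
  -- rewrite the tsum over the range as a tsum over the parameters
  have key : ∀ k : Fin m → ℕ,
      κ * Real.exp (-ε * ∑ j, ((f k) j : ℝ) * (a j : ℝ)) =
      (κ * Real.exp (-ε * ∑ j, (b j : ℝ) * (a j : ℝ))) * ∏ i, r i ^ k i := by
    intro k
    have hsum : (∑ j, ((f k) j : ℝ) * (a j : ℝ)) =
        (∑ j, (b j : ℝ) * (a j : ℝ)) + ∑ i, (k i : ℝ) * ∑ j, (p i j : ℝ) * (a j : ℝ) := by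
      simp only [hf]
      push_cast
      simp_rw [add_mul, Finset.sum_add_distrib, Finset.sum_mul, mul_assoc]
      rw [Finset.sum_comm]
      simp_rw [Finset.mul_sum]
    rw [hsum, mul_add, Real.exp_add, ← mul_assoc]
    congr 1
    rw [Finset.mul_sum, Real.exp_sum]
    congr 1
    funext i
    rw [hr, ← Real.exp_nat_mul]
    ring_nf
  rw [← Equiv.tsum_eq (Equiv.ofInjective f hsimple)]
  simp only [Equiv.ofInjective_apply]
  calc ∑' k : Fin m → ℕ, κ * Real.exp (-ε * ∑ j, ((f k) j : ℝ) * (a j : ℝ))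
      = ∑' k : Fin m → ℕ, (κ * Real.exp (-ε * ∑ j, (b j : ℝ) * (a j : ℝ))) * ∏ i, r i ^ k i := by
        exact tsum_congr key
    _ = (κ * Real.exp (-ε * ∑ j, (b j : ℝ) * (a j : ℝ))) * ∑' k : Fin m → ℕ, ∏ i, r i ^ k i :=
        tsum_mul_left
    _ = κ * Real.exp (-ε * ∑ j, (b j : ℝ) * (a j : ℝ)) * ∏ i, (1 - r i)⁻¹ := by
        rw [(geom_pi_aux m r hr0 hr1).2]
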